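/- Let N, M ≥ 1 and let 𝒬 ⊆ ℝ^{N×M} be a nonempty compact convex set, each element of which is row-stochastic with strictly positive entries. Then the robust channel capacity is bounded above as follows: sup_{p ∈ Δ_N} inf_{Q ∈ 𝒬} I(p,Q) ≤ inf_{Q ∈ 𝒬} [ log N + max_{1 ≤ n ≤ N} Σ_{m=1}^M Q_{nm} log( Q_{nm} / Σ_{l=1}^N Q_{lm} ) ]. -/

import Mathlib

open Real

/-- Average mutual information `I(p,Q)`. -/
noncomputable def AMI {N M : ℕ} (p : Fin N → ℝ) (Q : Fin N → Fin M → ℝ) : ℝ :=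
  ∑ n, ∑ m, p n * Q n m * Real.log (Q n m / ∑ l, p l * Q l m)

/-- `Q` is row-stochastic with strictly positive entries. -/
def rowStochPos {N M : ℕ} (Q : Fin N → Fin M → ℝ) : Prop :=
  (∀ n m, 0 < Q n m) ∧ ∀ n, ∑ m, Q n m = 1

/-- Robust channel capacity `sup_{p ∈ Δ_N} inf_{Q ∈ 𝒬} I(p,Q)`. -/
noncomputable def robustCap {N M : ℕ} (𝒬 : Set (Fin N → Fin M → ℝ)) : ℝ :=
  sSup { x | ∃ p ∈ stdSimplex ℝ (Fin N), x = sInf { y | ∃ Q ∈ 𝒬, y = AMI p Q } }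

section aux
variable {N M : ℕ}

lemma exists_pos_of_simplex (hN : 0 < N) {p : Fin N → ℝ} (hp : p ∈ stdSimplex ℝ (Fin N)) :
    ∃ l, 0 < p l := by
  by_contra h
  push_neg at h
  have : ∀ l, p l = 0 := fun l => le_antisymm (h l) (hp.1 l)
  have h1 := hp.2
  simp [this] at h1

lemma AMI_nonneg (hN : 0 < N) {p : Fin N → ℝ} (hp : p ∈ stdSimplex ℝ (Fin N))
    {Q : Fin N → Fin M → ℝ} (hQ : rowStochPos Q) : 0 ≤ AMI p Q := by
  obtain ⟨hQpos, hQrow⟩ := hQ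
  set s : Fin M → ℝ := fun m => ∑ l, p l * Q l m with hs_def
  have hs : ∀ m, 0 < s m := by
    intro m
    obtain ⟨l, hl⟩ := exists_pos_of_simplex hN hp
    exact Finset.sum_pos' (fun i _ => mul_nonneg (hp.1 i) (hQpos i m).le)
      ⟨l, Finset.mem_univ l, mul_pos hl (hQpos l m)⟩
  have key : ∀ n m, p n * Q n m - p n * s m ≤ p n * Q n m * Real.log (Q n m / s m) := by
    intro n m
    rcases eq_or_lt_of_le (hp.1 n) with h | h
    · simp [← h]
    · have hq := hQpos n m
      have hlog : Real.log (s m / Q n m) ≤ s m / Q n m - 1 :=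
        Real.log_le_sub_one_of_pos (div_pos (hs m) hq)
      have heq : Real.log (Q n m / s m) = - Real.log (s m / Q n m) := by
        rw [← Real.log_inv, inv_div]
      have : 1 - s m / Q n m ≤ Real.log (Q n m / s m) := by
        rw [heq]; linarith
      have h2 := mul_le_mul_of_nonneg_left this (mul_pos h hq).le
      calc p n * Q n m - p n * s m = p n * Q n m * (1 - s m / Q n m) := by
            field_simp
        _ ≤ p n * Q n m * Real.log (Q n m / s m) := h2
  have hsum : (0:ℝ) = ∑ n, ∑ m, (p n * Q n m - p n * s m) := by
    have : ∀ n, ∑ m, (p n * Q n m - p n * s m) = p n - p n * ∑ m, s m := by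
      intro n
      rw [Finset.sum_sub_distrib, ← Finset.mul_sum, ← Finset.mul_sum, hQrow n, mul_one]
    rw [Finset.sum_congr rfl (fun n _ => this n)]
    have hss : ∑ m, s m = 1 := by
      rw [hs_def]
      rw [Finset.sum_comm]
      have : ∀ l, ∑ m, p l * Q l m = p l := by
        intro l; rw [← Finset.mul_sum, hQrow l, mul_one]
      rw [Finset.sum_congr rfl (fun l _ => this l)]
      exact hp.2
    simp [hss, hp.2]
  rw [AMI]
  calc (0:ℝ) = ∑ n, ∑ m, (p n * Q n m - p n * s m) := hsum
    _ ≤ ∑ n, ∑ m, p n * Q n m * Real.log (Q n m / s m) :=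
        Finset.sum_le_sum fun n _ => Finset.sum_le_sum fun m _ => key n m

lemma AMI_le (hN : 0 < N) (hne' : (Finset.univ : Finset (Fin N)).Nonempty)
    {p : Fin N → ℝ} (hp : p ∈ stdSimplex ℝ (Fin N))
    {Q : Fin N → Fin M → ℝ} (hQ : rowStochPos Q) :
    AMI p Q ≤ Real.log N +
      Finset.univ.sup' hne' (fun n => ∑ m, Q n m * Real.log (Q n m / ∑ l, Q l m)) := by
  obtain ⟨hQpos, hQrow⟩ := hQ
  set s : Fin M → ℝ := fun m => ∑ l, p l * Q l m with hs_def
  set t : Fin M → ℝ := fun m => ∑ l, Q l m with ht_def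
  have ht : ∀ m, 0 < t m :=
    fun m => Finset.sum_pos (fun i _ => hQpos i m) (Finset.univ_nonempty_iff.mpr (Fin.pos_iff_nonempty.mp hN))
  have hs : ∀ m, 0 < s m := by
    intro m
    obtain ⟨l, hl⟩ := exists_pos_of_simplex hN hp
    exact Finset.sum_pos' (fun i _ => mul_nonneg (hp.1 i) (hQpos i m).le)
      ⟨l, Finset.mem_univ l, mul_pos hl (hQpos l m)⟩
  have hNpos : (0:ℝ) < N := Nat.cast_pos.mpr hN
  have hss : ∑ m, s m = 1 := by
    rw [hs_def, Finset.sum_comm]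
    have : ∀ l, ∑ m, p l * Q l m = p l := fun l => by rw [← Finset.mul_sum, hQrow l, mul_one]
    rw [Finset.sum_congr rfl (fun l _ => this l)]; exact hp.2
  have htt : ∑ m, t m = N := by
    rw [ht_def, Finset.sum_comm]
    simp [hQrow]
  -- Step A: decomposition
  have stepA : AMI p Q = (∑ n, ∑ m, p n * Q n m * (Real.log N + Real.log (Q n m / t m)))
      + ∑ m, s m * Real.log (t m / (N * s m)) := by
    have hsw : ∑ m, s m * Real.log (t m / (N * s m))
        = ∑ n, ∑ m, p n * Q n m * Real.log (t m / (N * s m)) := by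
      rw [Finset.sum_comm]
      refine Finset.sum_congr rfl fun m _ => ?_
      rw [hs_def]
      simp only
      rw [Finset.sum_mul]
    rw [hsw, ← Finset.sum_add_distrib]
    rw [AMI]
    refine Finset.sum_congr rfl fun n _ => ?_
    rw [← Finset.sum_add_distrib]
    refine Finset.sum_congr rfl fun m _ => ?_
    rcases eq_or_lt_of_le (hp.1 n) with h | h
    · simp [← h]
    · rw [← mul_add]
      congr 1
      rw [Real.log_div (hQpos n m).ne' (hs m).ne',
          Real.log_div (hQpos n m).ne' (ht m).ne',
          Real.log_div (ht m).ne' (mul_pos hNpos (hs m)).ne',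
          Real.log_mul hNpos.ne' (hs m).ne']
      ring
  -- Step B: second part ≤ 0
  have stepB : ∑ m, s m * Real.log (t m / (N * s m)) ≤ 0 := by
    have : ∀ m, s m * Real.log (t m / (N * s m)) ≤ t m / N - s m := by
      intro m
      have hlog : Real.log (t m / (N * s m)) ≤ t m / (N * s m) - 1 :=
        Real.log_le_sub_one_of_pos (div_pos (ht m) (mul_pos hNpos (hs m)))
      have := mul_le_mul_of_nonneg_left hlog (hs m).le
      calc s m * Real.log (t m / (N * s m)) ≤ s m * (t m / (N * s m) - 1) := this
        _ = t m / N - s m := by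
            have h1 := (hs m).ne'
            have h2 := hNpos.ne'
            field_simp
    calc ∑ m, s m * Real.log (t m / (N * s m)) ≤ ∑ m, (t m / N - s m) :=
          Finset.sum_le_sum fun m _ => this m
      _ = 0 := by
          rw [Finset.sum_sub_distrib, ← Finset.sum_div, htt, hss]
          field_simp
          norm_num
  -- Step C: first part ≤ log N + sup'
  set c := Finset.univ.sup' hne' (fun n => ∑ m, Q n m * Real.log (Q n m / t m)) with hc
  have stepC : (∑ n, ∑ m, p n * Q n m * (Real.log N + Real.log (Q n m / t m)))
      ≤ Real.log N + c := by
    have hinner : ∀ n, ∑ m, p n * Q n m * (Real.log N + Real.log (Q n m / t m))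
        = p n * (Real.log N + ∑ m, Q n m * Real.log (Q n m / t m)) := by
      intro n
      rw [mul_add, Finset.mul_sum]
      rw [Finset.sum_congr rfl (fun m _ => by ring : ∀ m ∈ Finset.univ,
        p n * Q n m * (Real.log N + Real.log (Q n m / t m))
        = p n * Q n m * Real.log N + p n * (Q n m * Real.log (Q n m / t m)))]
      rw [Finset.sum_add_distrib]
      congr 1
      rw [← Finset.sum_mul, ← Finset.mul_sum, hQrow n, mul_one]
    rw [Finset.sum_congr rfl (fun n _ => hinner n)]
    calc ∑ n, p n * (Real.log N + ∑ m, Q n m * Real.log (Q n m / t m))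
        ≤ ∑ n, p n * (Real.log N + c) := by
          refine Finset.sum_le_sum fun n _ => mul_le_mul_of_nonneg_left ?_ (hp.1 n)
          have := Finset.le_sup' (fun n => ∑ m, Q n m * Real.log (Q n m / t m))
            (Finset.mem_univ n)
          linarith
      _ = Real.log N + c := by rw [← Finset.sum_mul, hp.2, one_mul]
  linarith

end aux

theorem robust_capacity_upper_bound
    {N M : ℕ} (hN : 0 < N) (hM : 0 < M)
    (𝒬 : Set (Fin N → Fin M → ℝ))
    (hne : 𝒬.Nonempty) (hcomp : IsCompact 𝒬) (hconv : Convex ℝ 𝒬)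
    (hQ : ∀ Q ∈ 𝒬, rowStochPos Q) :
    robustCap 𝒬 ≤
      sInf { x | ∃ Q ∈ 𝒬,
        x = Real.log N +
          Finset.univ.sup' (Finset.univ_nonempty_iff.mpr (Fin.pos_iff_nonempty.mp hN))
            (fun n => ∑ m, Q n m * Real.log (Q n m / ∑ l, Q l m)) } := by
  have hne' : (Finset.univ : Finset (Fin N)).Nonempty :=
    Finset.univ_nonempty_iff.mpr (Fin.pos_iff_nonempty.mp hN)
  obtain ⟨Q₁, hQ₁⟩ := hne
  apply le_csInf
  · exact ⟨_, ⟨Q₁, hQ₁, rfl⟩⟩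
  rintro y ⟨Q0, hQ0, rfl⟩
  rw [robustCap]
  have hpne : ∃ p, p ∈ stdSimplex ℝ (Fin N) := by
    refine ⟨fun _ => (N:ℝ)⁻¹, fun i => by positivity, ?_⟩
    simp
    field_simp
  obtain ⟨p₁, hp₁⟩ := hpne
  apply csSup_le
  · exact ⟨_, ⟨p₁, hp₁, rfl⟩⟩
  rintro x ⟨p, hp, rfl⟩
  have hbdd : BddBelow { y | ∃ Q ∈ 𝒬, y = AMI p Q } := by
    refine ⟨0, ?_⟩
    rintro y ⟨Q, hQm, rfl⟩
    exact AMI_nonneg hN hp (hQ Q hQm)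
  calc sInf { y | ∃ Q ∈ 𝒬, y = AMI p Q } ≤ AMI p Q0 := csInf_le hbdd ⟨Q0, hQ0, rfl⟩
    _ ≤ _ := AMI_le hN hne' hp (hQ Q0 hQ0)
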